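/- Let C be an F_2-linear code in H(m,2) whose minimum distance δ satisfies 3 ≤ δ < m, and suppose that for some integer λ ≥ 1 the set of weight-δ codewords of C forms a 2-(m,δ,λ) design, i.e., for every pair of distinct coordinates i,j ∈ M, exactly λ codewords α ∈ C of weight δ satisfy α_i = α_j = 1. Let δ^⊥ denote the minimum distance of the dual code C^⊥. Then m − 1 ≤ (δ − 1)(δ^⊥ − 1). -/

import Mathlib

open Equiv

namespace Paper

/-- A Hamming-graph automorphism of `Fin m → Q` given by entrywise permutations `h`
and a permutation `σ` of the entries. -/
def IsQAutPair {m : ℕ} {Q : Type*} (g : Perm (Fin m → Q)) (h : Fin m → Perm Q)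
    (σ : Perm (Fin m)) : Prop :=
  ∀ α i, g α i = h i (α (σ.symm i))

/-- `g` is an automorphism of the Hamming graph `H(m,q)`. -/
def IsQAut {m : ℕ} {Q : Type*} (g : Perm (Fin m → Q)) : Prop :=
  ∃ h σ, IsQAutPair g h σ

/-- The permutation group `X_i^{Q_i}` induced on the alphabet in entry `i`
by the stabiliser in `X` of the entry `i`. -/
def indQ {m : ℕ} {Q : Type*} (X : Set (Perm (Fin m → Q))) (i : Fin m) : Set (Perm Q) :=
  {π | ∃ g ∈ X, ∃ h σ, IsQAutPair g h σ ∧ σ i = i ∧ h i = π}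

/-- `C_s`, the set of vertices at Hamming distance exactly `s` from the code `C`. -/
def distSet {m : ℕ} {Q : Type*} [DecidableEq Q] (C : Set (Fin m → Q)) (s : ℕ) :
    Set (Fin m → Q) :=
  {v | (∃ c ∈ C, hammingDist v c = s) ∧ ∀ c ∈ C, s ≤ hammingDist v c}

/-- `C` is `(X,s)`-neighbour-transitive: `X` acts transitively on each of
`C = C_0, C_1, …, C_s`. -/
def NbrTrans {m : ℕ} {Q : Type*} [DecidableEq Q] (X : Set (Perm (Fin m → Q)))
    (C : Set (Fin m → Q)) (s : ℕ) : Prop :=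
  ∀ j ≤ s, ∀ u ∈ distSet C j, ∀ v ∈ distSet C j, ∃ g ∈ X, g u = v

/-- `δ` is the minimum distance of the code `C`. -/
def IsMinDist {m : ℕ} {Q : Type*} [DecidableEq Q] (C : Set (Fin m → Q)) (δ : ℕ) : Prop :=
  (∃ u ∈ C, ∃ v ∈ C, u ≠ v ∧ hammingDist u v = δ) ∧
  ∀ u ∈ C, ∀ v ∈ C, u ≠ v → δ ≤ hammingDist u v

/-- The vertex set `V = F_2^m` of the binary Hamming graph `H(m,2)`. -/
abbrev BV (m : ℕ) : Type := Fin m → ZMod 2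

/-- `g` is an automorphism of the binary Hamming graph `H(m,2)`:
`g : v ↦ v^σ + c` for some `σ ∈ Sym(M)` and `c ∈ V`. -/
def IsB2Aut {m : ℕ} (g : Perm (BV m)) : Prop :=
  ∃ (σ : Perm (Fin m)) (c : BV m), ∀ v, g v = (fun i => v (σ.symm i)) + c

/-- The dual of a binary code under the standard inner product. -/
def dualCode {m : ℕ} (D : Set (BV m)) : Set (BV m) :=
  {w | ∀ v ∈ D, (∑ i, v i * w i) = 0}


theorem stmt13 (m δ δd lam : ℕ) (C : Submodule (ZMod 2) (BV m))
    (hδ : IsMinDist (C : Set (BV m)) δ) (h3 : 3 ≤ δ) (hlt : δ < m)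
    (hlam : 1 ≤ lam)
    -- the weight-`δ` codewords form a 2-(m,δ,λ) design
    (hdes : ∀ i j : Fin m, i ≠ j →
      {α : BV m | α ∈ C ∧ hammingDist α 0 = δ ∧ α i = 1 ∧ α j = 1}.ncard = lam)
    -- `δ^⊥` is the minimum distance of the dual code
    (hdual : IsMinDist (dualCode (C : Set (BV m))) δd) :
    m - 1 ≤ (δ - 1) * (δd - 1) := by
  classical
  have hz2 : ∀ x : ZMod 2, x ≠ 0 ↔ x = 1 := by decide
  -- a minimal-weight dual word
  obtain ⟨⟨u, hu, v, hv, huv, hduv⟩, -⟩ := hdual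
  set w : BV m := u - v with hw
  have hwC : ∀ α : BV m, α ∈ C → (∑ t, α t * w t) = 0 := by
    intro α hα
    have h1 := hu α hα
    have h2 := hv α hα
    simp only [hw, Pi.sub_apply, mul_sub, Finset.sum_sub_distrib, h1, h2, sub_zero]
  have hwne : w ≠ 0 := sub_ne_zero.mpr huv
  set S : Finset (Fin m) := Finset.univ.filter (fun t => w t ≠ 0) with hS
  have hScard : S.card = δd := by
    have := hduv
    rw [hammingDist_comm, hammingDist_eq_hammingNorm, neg_add_eq_sub, ← hw] at this
    simpa [hS, hammingNorm, Finset.filter_ne'] using this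
  -- pick i in the support of w
  have hSne : S.Nonempty := by
    rw [Finset.filter_nonempty_iff]
    by_contra h
    push_neg at h
    exact hwne (funext fun t => by simpa using h t (Finset.mem_univ t))
  obtain ⟨i, hiS⟩ := hSne
  have hwi : w i ≠ 0 := (Finset.mem_filter.mp hiS).2
  -- the sets
  set A : Finset (BV m) :=
    Finset.univ.filter (fun α => α ∈ C ∧ hammingDist α 0 = δ ∧ α i = 1) with hA
  have hAj : ∀ j : Fin m, j ≠ i →
      (Finset.univ.filter
        (fun α : BV m => α ∈ C ∧ hammingDist α 0 = δ ∧ α i = 1 ∧ α j = 1)).card = lam := by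
    intro j hj
    have := hdes i j (Ne.symm hj)
    rw [show {α : BV m | α ∈ C ∧ hammingDist α 0 = δ ∧ α i = 1 ∧ α j = 1}
        = ↑(Finset.univ.filter
          (fun α : BV m => α ∈ C ∧ hammingDist α 0 = δ ∧ α i = 1 ∧ α j = 1)) by
      ext α; rw [Finset.mem_coe, Finset.mem_filter]; exact ⟨fun h => ⟨Finset.mem_univ _, h⟩, fun h => h.2⟩] at this
    rwa [Set.ncard_coe_finset] at this
  -- each α ∈ A has exactly δ - 1 ones away from i
  have hones : ∀ α ∈ A, ((Finset.univ.erase i).filter (fun j => α j = 1)).card = δ - 1 := by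
    intro α hα
    obtain ⟨-, hαC, hd, hi1⟩ := Finset.mem_filter.mp hα
    have hwt : (Finset.univ.filter (fun j => α j = 1)).card = δ := by
      rw [hammingDist_zero_right] at hd
      rw [← hd]
      simp only [hammingNorm]
      congr 1
      ext j
      simp [hz2]
    rw [Finset.filter_erase, Finset.card_erase_of_mem (by simp [hi1]), hwt]
  -- STEP 1: (m-1) * lam = A.card * (δ - 1)
  have step1 : (m - 1) * lam = A.card * (δ - 1) := by
    have key : ∑ j ∈ Finset.univ.erase i,
        (A.filter (fun α => α j = 1)).card = A.card * (δ - 1) := by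
      calc ∑ j ∈ Finset.univ.erase i, (A.filter (fun α => α j = 1)).card
          = ∑ j ∈ Finset.univ.erase i, ∑ α ∈ A, if α j = 1 then 1 else 0 :=
            Finset.sum_congr rfl fun j _ => Finset.card_filter _ _
        _ = ∑ α ∈ A, ∑ j ∈ Finset.univ.erase i, if α j = 1 then 1 else 0 :=
            Finset.sum_comm
        _ = ∑ α ∈ A, ((Finset.univ.erase i).filter (fun j => α j = 1)).card :=
            Finset.sum_congr rfl fun α _ => (Finset.card_filter _ _).symm
        _ = ∑ α ∈ A, (δ - 1) := Finset.sum_congr rfl hones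
        _ = A.card * (δ - 1) := by rw [Finset.sum_const, smul_eq_mul]
    have hfil : ∀ j : Fin m, A.filter (fun α => α j = 1) =
        Finset.univ.filter
          (fun α : BV m => α ∈ C ∧ hammingDist α 0 = δ ∧ α i = 1 ∧ α j = 1) := by
      intro j
      ext α
      rw [Finset.mem_filter, hA, Finset.mem_filter, Finset.mem_filter]; simp only [Finset.mem_univ, true_and, and_assoc]
    rw [← key]
    rw [Finset.sum_congr rfl (fun j hj => by
      rw [hfil j, hAj j (Finset.ne_of_mem_erase hj)])]
    simp [Finset.card_erase_of_mem, Finset.card_univ, mul_comm]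
  -- STEP 2: A ⊆ union over S.erase i
  have step2 : A.card ≤ (δd - 1) * lam := by
    have hsub : A ⊆ (S.erase i).biUnion
        (fun k => A.filter (fun α => α k = 1)) := by
      intro α hα
      obtain ⟨hαC, hd, hi1⟩ := (Finset.mem_filter.mp hα).2
      by_contra hcon
      simp only [Finset.mem_biUnion, not_exists, not_and] at hcon
      have hzero : ∀ k ∈ S.erase i, α k = 0 := by
        intro k hk
        by_contra hk0
        have hmem : α ∈ A.filter (fun β => β k = 1) :=
          Finset.mem_filter.mpr ⟨hα, (hz2 _).mp hk0⟩
        exact hcon k hk hmem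
      have hsum : (∑ t, α t * w t) = α i * w i := by
        apply Finset.sum_eq_single i
        · intro t _ ht
          by_cases htS : t ∈ S
          · rw [hzero t (Finset.mem_erase.mpr ⟨ht, htS⟩), zero_mul]
          · have : w t = 0 := by
              by_contra h
              exact htS (Finset.mem_filter.mpr ⟨Finset.mem_univ t, h⟩)
            rw [this, mul_zero]
        · intro h; exact absurd (Finset.mem_univ i) h
      rw [hwC α hαC] at hsum
      rw [hi1, one_mul] at hsum
      exact hwi hsum.symm
    calc A.card ≤ ((S.erase i).biUnion (fun k => A.filter (fun α => α k = 1))).card :=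
          Finset.card_le_card hsub
      _ ≤ ∑ k ∈ S.erase i, (A.filter (fun α => α k = 1)).card := Finset.card_biUnion_le
      _ = ∑ k ∈ S.erase i, lam := by
          refine Finset.sum_congr rfl fun k hk => ?_
          have : A.filter (fun α => α k = 1) =
              Finset.univ.filter
                (fun α : BV m => α ∈ C ∧ hammingDist α 0 = δ ∧ α i = 1 ∧ α k = 1) := by
            ext α; rw [Finset.mem_filter, hA, Finset.mem_filter, Finset.mem_filter]; simp only [Finset.mem_univ, true_and, and_assoc]
          rw [this, hAj k (Finset.ne_of_mem_erase hk)]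
      _ = (δd - 1) * lam := by
          rw [Finset.sum_const, smul_eq_mul, Finset.card_erase_of_mem hiS, hScard]
  -- combine
  have : (m - 1) * lam ≤ (δ - 1) * ((δd - 1) * lam) := by
    rw [step1]
    calc A.card * (δ - 1) ≤ ((δd - 1) * lam) * (δ - 1) :=
          Nat.mul_le_mul_right _ step2
      _ = (δ - 1) * ((δd - 1) * lam) := by ring
    
  have h := this
  rw [← mul_assoc] at h
  exact Nat.le_of_mul_le_mul_right h (Nat.lt_of_lt_of_le Nat.zero_lt_one hlam)


end Paper
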